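/- Let F(w) = (1-w) - \sum_{k\ge 1} p_k (1-w)^k with \sum p_k = 1, \sum k p_k = 2, \sum k^2 p_k = \mu_2 < \infty. Then for all w \in [0,1], F(w) \ge w - (1/2)(\mu_2 - 2) w^2. Consequently, for w \in (0,1], F(w)/w \ge 1 - (1/2)(\mu_2 - 2) w. -/
import Mathlib

lemma binom_ineq (w : ℝ) (hw0 : 0 ≤ w) (hw1 : w ≤ 1) :
    ∀ k : ℕ, (1 - w) ^ k ≤ 1 - k * w + (k * ((k : ℝ) - 1)) / 2 * w ^ 2 := by
  intro k
  induction k with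
  | zero => simp
  | succ n ih =>
    have ha : (0 : ℝ) ≤ 1 - w := by linarith
    have h2 : (1 - w) * (1 - w) ^ n
        ≤ (1 - w) * (1 - n * w + (n * ((n : ℝ) - 1)) / 2 * w ^ 2) :=
      mul_le_mul_of_nonneg_left ih ha
    have hn : (0 : ℝ) ≤ (n : ℝ) * ((n : ℝ) - 1) := by
      rcases Nat.eq_zero_or_pos n with h | h
      · simp [h]
      · have h1 : (1 : ℝ) ≤ (n : ℝ) := by exact_mod_cast h
        nlinarith
    have hw3 : (0 : ℝ) ≤ w ^ 3 := by positivity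
    have : (1 - w) ^ (n + 1) = (1 - w) * (1 - w) ^ n := by ring
    rw [this]
    push_cast
    nlinarith [mul_nonneg hn hw3]

/-- For `F(w) = (1-w) - ∑_{k≥1} p_k (1-w)^k` with `∑ p_k = 1`, mean 2 and
second moment `μ₂ < ∞`, one has `F(w) ≥ w - (1/2)(μ₂-2)w²` on `[0,1]`, and consequently
`F(w)/w ≥ 1 - (1/2)(μ₂-2)w` for `w ∈ (0,1]`. -/
theorem stmt1
    (p : ℕ → ℝ) (μ₂ : ℝ)
    (hp_nonneg : ∀ k, 0 ≤ p k) (hp0 : p 0 = 0)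
    (hsum : ∑' (k : ℕ), p k = 1)
    (hmean : ∑' (k : ℕ), (k : ℝ) * p k = 2)
    (hsq_summable : Summable (fun (k : ℕ) => (k : ℝ) ^ 2 * p k))
    (hsq : ∑' (k : ℕ), (k : ℝ) ^ 2 * p k = μ₂)
    (F : ℝ → ℝ)
    (hF : ∀ w, F w = (1 - w) - ∑' (k : ℕ), p k * (1 - w) ^ k) :
    (∀ w ∈ Set.Icc (0 : ℝ) 1, F w ≥ w - (1 / 2) * (μ₂ - 2) * w ^ 2) ∧
      ∀ w ∈ Set.Ioc (0 : ℝ) 1, F w / w ≥ 1 - (1 / 2) * (μ₂ - 2) * w := by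
  have hp_le : ∀ k : ℕ, p k ≤ (k : ℝ) ^ 2 * p k := by
    intro k
    rcases Nat.eq_zero_or_pos k with h | h
    · simp [h, hp0]
    · have h1 : (1 : ℝ) ≤ (k : ℝ) := by exact_mod_cast h
      have h2 : (1 : ℝ) ≤ (k : ℝ) ^ 2 := by nlinarith
      calc p k = 1 * p k := (one_mul _).symm
        _ ≤ (k : ℝ) ^ 2 * p k := mul_le_mul_of_nonneg_right h2 (hp_nonneg k)
  have hp_summable : Summable p :=
    hsq_summable.of_nonneg_of_le hp_nonneg hp_le
  have hkp_le : ∀ k : ℕ, (k : ℝ) * p k ≤ (k : ℝ) ^ 2 * p k := by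
    intro k
    have h1 : (k : ℝ) * p k = (k : ℝ) * p k * 1 := (mul_one _).symm
    rw [h1]
    have h2 : (k : ℝ) ^ 2 * p k = (k : ℝ) * p k * (k : ℝ) := by ring
    rw [h2]
    rcases Nat.eq_zero_or_pos k with h | h
    · simp [h]
    · exact mul_le_mul_of_nonneg_left (by exact_mod_cast h)
        (mul_nonneg (Nat.cast_nonneg k) (hp_nonneg k))
  have hkp_nonneg : ∀ k : ℕ, 0 ≤ (k : ℝ) * p k := fun k =>
    mul_nonneg (Nat.cast_nonneg k) (hp_nonneg k)
  have hkp_summable : Summable (fun k : ℕ => (k : ℝ) * p k) :=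
    hsq_summable.of_nonneg_of_le hkp_nonneg hkp_le
  have key : ∀ w ∈ Set.Icc (0 : ℝ) 1, F w ≥ w - (1 / 2) * (μ₂ - 2) * w ^ 2 := by
    rintro w ⟨hw0, hw1⟩
    have ha0 : (0 : ℝ) ≤ 1 - w := by linarith
    have ha1 : (1 : ℝ) - w ≤ 1 := by linarith
    have hsumm_lhs : Summable (fun k : ℕ => p k * (1 - w) ^ k) := by
      apply hp_summable.of_nonneg_of_le
      · intro k; exact mul_nonneg (hp_nonneg k) (pow_nonneg ha0 k)
      · intro k
        have : (1 - w) ^ k ≤ 1 := pow_le_one₀ ha0 ha1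
        nlinarith [hp_nonneg k]
    -- RHS as sum of four summable pieces
    have hs1 : Summable (fun k : ℕ => ((k : ℝ) * p k) * (-w)) := hkp_summable.mul_right _
    have hs2 : Summable (fun k : ℕ => ((k : ℝ) ^ 2 * p k) * (w ^ 2 / 2)) :=
      hsq_summable.mul_right _
    have hs3 : Summable (fun k : ℕ => ((k : ℝ) * p k) * (-(w ^ 2 / 2))) :=
      hkp_summable.mul_right _
    have hsumm_rhs : Summable (fun k : ℕ =>
        p k + ((k : ℝ) * p k) * (-w) + ((k : ℝ) ^ 2 * p k) * (w ^ 2 / 2)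
          + ((k : ℝ) * p k) * (-(w ^ 2 / 2))) :=
      ((hp_summable.add hs1).add hs2).add hs3
    have hpt : ∀ k : ℕ, p k * (1 - w) ^ k ≤
        p k + ((k : ℝ) * p k) * (-w) + ((k : ℝ) ^ 2 * p k) * (w ^ 2 / 2)
          + ((k : ℝ) * p k) * (-(w ^ 2 / 2)) := by
      intro k
      have hb := binom_ineq w hw0 hw1 k
      have := mul_le_mul_of_nonneg_left hb (hp_nonneg k)
      nlinarith [this]
    have hle : ∑' k, p k * (1 - w) ^ k ≤ ∑' k : ℕ,
        (p k + ((k : ℝ) * p k) * (-w) + ((k : ℝ) ^ 2 * p k) * (w ^ 2 / 2)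
          + ((k : ℝ) * p k) * (-(w ^ 2 / 2))) :=
      Summable.tsum_le_tsum hpt hsumm_lhs hsumm_rhs
    have htsum : ∑' k : ℕ,
        (p k + ((k : ℝ) * p k) * (-w) + ((k : ℝ) ^ 2 * p k) * (w ^ 2 / 2)
          + ((k : ℝ) * p k) * (-(w ^ 2 / 2)))
        = 1 + 2 * (-w) + μ₂ * (w ^ 2 / 2) + 2 * (-(w ^ 2 / 2)) := by
      rw [Summable.tsum_add ((hp_summable.add hs1).add hs2) hs3,
          Summable.tsum_add (hp_summable.add hs1) hs2,
          Summable.tsum_add hp_summable hs1,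
          tsum_mul_right, tsum_mul_right, tsum_mul_right, hsum, hmean, hsq]
    rw [hF w, ge_iff_le]
    have : ∑' k, p k * (1 - w) ^ k ≤ 1 - 2 * w + (μ₂ - 2) * (w ^ 2 / 2) := by
      rw [htsum] at hle; linarith
    linarith
  refine ⟨key, ?_⟩
  rintro w ⟨hw0, hw1⟩
  have h := key w ⟨le_of_lt hw0, hw1⟩
  rw [ge_iff_le, le_div_iff₀ hw0]
  nlinarith [h]
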